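/- In the N-player Prisoner's Dilemma with Pareto-optimal mutual cooperation, if u lies in the convex hull E of payoff vectors and -δ ≤ μ¹(u) ≤ 0, then u₁ ≤ v(C,N-1). -/

import Mathlib

open Finset

/-- In the `N`-player PD with Pareto-optimal mutual cooperation: if `u ∈ E` and
`-δ ≤ μ¹(u) ≤ 0`, then `u₁ ≤ v(C,N-1)`. -/
theorem payoff_upper_bound (N : ℕ) (hN : 2 ≤ N) (vC vD : ℕ → ℝ) (δ : ℝ) (hδ : 0 ≤ δ)
    (U : (Fin N → Bool) → Fin N → ℝ)
    (hU : ∀ s i, U s i = if s i then vC ((univ.filter fun j => j ≠ i ∧ s j = true)).card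
                        else vD ((univ.filter fun j => j ≠ i ∧ s j = true)).card)
    (hPareto : ∀ s, (∑ i, U s i) ≤ (N : ℝ) * vC (N - 1))
    (u : Fin N → ℝ)
    (hu : u ∈ convexHull ℝ {x | ∃ s, x = U s})
    (hμ1 : -δ ≤ u ⟨0, by omega⟩ -
      (1 / ((N : ℝ) - 1)) * ∑ j ∈ univ.filter (fun j => j ≠ (⟨0, by omega⟩ : Fin N)), u j)
    (hμ2 : u ⟨0, by omega⟩ -
      (1 / ((N : ℝ) - 1)) * ∑ j ∈ univ.filter (fun j => j ≠ (⟨0, by omega⟩ : Fin N)), u j ≤ 0) :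
    u ⟨0, by omega⟩ ≤ vC (N - 1) := by
  set i0 : Fin N := ⟨0, by omega⟩
  -- total payoff bound on the convex hull
  have hsum : ∑ i, u i ≤ (N : ℝ) * vC (N - 1) := by
    have hconv : Convex ℝ {x : Fin N → ℝ | ∑ i, x i ≤ (N : ℝ) * vC (N - 1)} := by
      apply convex_halfSpace_le (f := fun x : Fin N → ℝ => ∑ i, x i)
      constructor
      · intro x y; simp [Finset.sum_add_distrib]
      · intro c x; simp [Finset.mul_sum]
    have hsub : {x | ∃ s, x = U s} ⊆ {x : Fin N → ℝ | ∑ i, x i ≤ (N : ℝ) * vC (N - 1)} := by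
      rintro x ⟨s, rfl⟩; exact hPareto s
    exact convexHull_min hsub hconv hu
  have hsplit : ∑ j ∈ univ.filter (fun j => j ≠ i0), u j = (∑ i, u i) - u i0 := by
    rw [eq_sub_iff_add_eq]
    rw [← Finset.sum_filter_add_sum_filter_not univ (fun j => j ≠ i0) u]
    congr 1
    rw [Finset.sum_filter]
    simp [Finset.sum_ite_eq']
  have hN1 : (0:ℝ) < (N : ℝ) - 1 := by
    have : (2:ℝ) ≤ (N:ℝ) := by exact_mod_cast hN
    linarith
  rw [hsplit] at hμ2
  have h2 : ((N:ℝ) - 1) * (u i0 - 1 / ((N : ℝ) - 1) * ((∑ i, u i) - u i0)) ≤ 0 :=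
    mul_nonpos_of_nonneg_of_nonpos (le_of_lt hN1) hμ2
  rw [mul_sub, ← mul_assoc, mul_one_div, div_self (ne_of_gt hN1), one_mul] at h2
  have hNpos : (0:ℝ) < (N:ℝ) := by linarith
  have : (N:ℝ) * u i0 ≤ (N:ℝ) * vC (N - 1) := by nlinarith
  exact le_of_mul_le_mul_left this hNpos
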